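/- Let x be an EFX allocation of a set S ⊆ M of items, and let j ∈ M \ S be an item with v_{hj} ≤ 0 for every agent h. Let i be an agent such that v_{ij} < 0, agent i envies no other agent under x (i.e., v_i(x_i) ≥ v_i(x_h) for all h ∈ N), and every c ∈ x_i with v_{ic} < 0 satisfies v_{ic} ≤ v_{ij}. Then the allocation x' obtained from x by adding j to the bundle of agent i is an EFX allocation of S ∪ {j}. -/

import Mathlib

open scoped Classical
open Finset

noncomputable section FairDivision

variable {N I : Type*}

/-- Additive value of agent `i` for a bundle `S`. -/
def bval (v : N → I → ℝ) (i : N) (S : Finset I) : ℝ := ∑ j ∈ S, v i j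

/-- `x` is an allocation of the item set `S`: the bundles are pairwise disjoint
and together cover exactly `S`. -/
def IsAllocation [Fintype N] (x : N → Finset I) (S : Finset I) : Prop :=
  (∀ i h : N, i ≠ h → Disjoint (x i) (x h)) ∧ Finset.univ.biUnion x = S

/-- Envy-freeness up to any item (mixed manna version). -/
def EFX (v : N → I → ℝ) (x : N → Finset I) : Prop :=
  ∀ i h : N,
    (∀ g ∈ x h, 0 < v i g → bval v i (x i) ≥ bval v i ((x h).erase g)) ∨
    (∀ c ∈ x i, v i c < 0 → bval v i ((x i).erase c) ≥ bval v i (x h))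

/-- The stronger notion EFX₀, where goods of zero value are also considered. -/
def EFX0 (v : N → I → ℝ) (x : N → Finset I) : Prop :=
  ∀ i h : N,
    (∀ g ∈ x h, 0 ≤ v i g → bval v i (x i) ≥ bval v i ((x h).erase g)) ∨
    (∀ c ∈ x i, v i c < 0 → bval v i ((x i).erase c) ≥ bval v i (x h))

/-- `dpos v x i`: the maximin good value `d_i(x)`: the maximum, over agents `h ≠ i`
whose bundle contains an item valued positively by `i`, of the minimum value
(for `i`) of such an item in `x h`; `0` if no such agent exists. -/
def dpos [Fintype N] (v : N → I → ℝ) (x : N → Finset I) (i : N) : ℝ :=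
  if hA : (Finset.univ.filter fun h =>
      h ≠ i ∧ ((x h).filter fun j => 0 < v i j).Nonempty).Nonempty then
    (Finset.univ.filter fun h =>
        h ≠ i ∧ ((x h).filter fun j => 0 < v i j).Nonempty).sup' hA fun h =>
      if hB : ((x h).filter fun j => 0 < v i j).Nonempty then
        ((x h).filter fun j => 0 < v i j).inf' hB fun j => v i j
      else 0
  else 0

/-- `dnn v x i`: the variant `d⁰_i(x)` of the maximin good value where
nonnegatively-valued items are considered. -/
def dnn [Fintype N] (v : N → I → ℝ) (x : N → Finset I) (i : N) : ℝ :=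
  if hA : (Finset.univ.filter fun h =>
      h ≠ i ∧ ((x h).filter fun j => 0 ≤ v i j).Nonempty).Nonempty then
    (Finset.univ.filter fun h =>
        h ≠ i ∧ ((x h).filter fun j => 0 ≤ v i j).Nonempty).sup' hA fun h =>
      if hB : ((x h).filter fun j => 0 ≤ v i j).Nonempty then
        ((x h).filter fun j => 0 ≤ v i j).inf' hB fun j => v i j
      else 0
  else 0

/-- Proportional share of agent `i`. -/
def propShare [Fintype N] (v : N → I → ℝ) (M : Finset I) (i : N) : ℝ :=
  bval v i M / (Fintype.card N : ℝ)

/-- Proportionality up to the maximin good or any bad. -/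
def PropMX [Fintype N] (v : N → I → ℝ) (M : Finset I) (x : N → Finset I) : Prop :=
  ∀ i : N,
    bval v i (x i) + dpos v x i ≥ propShare v M i ∨
    (∀ c ∈ x i, v i c < 0 → bval v i ((x i).erase c) ≥ propShare v M i)

/-- The stronger notion PropMX₀. -/
def PropMX0 [Fintype N] (v : N → I → ℝ) (M : Finset I) (x : N → Finset I) : Prop :=
  ∀ i : N,
    bval v i (x i) + dnn v x i ≥ propShare v M i ∨
    (∀ c ∈ x i, v i c < 0 → bval v i ((x i).erase c) ≥ propShare v M i)

/-- Utilitarian social welfare. -/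
def SW [Fintype N] (v : N → I → ℝ) (x : N → Finset I) : ℝ :=
  ∑ i : N, bval v i (x i)

/-- `y` Pareto-dominates `x`. -/
def ParetoDominates [Fintype N] (v : N → I → ℝ) (y x : N → Finset I) : Prop :=
  (∀ i : N, bval v i (y i) ≥ bval v i (x i)) ∧ ∃ h : N, bval v h (y h) > bval v h (x h)

/-- `x` is Pareto-optimal among allocations of `M`. -/
def ParetoOptimal [Fintype N] (v : N → I → ℝ) (M : Finset I) (x : N → Finset I) : Prop :=
  ¬ ∃ y : N → Finset I, IsAllocation y M ∧ ParetoDominates v y x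

/-- `x` maximizes the social welfare over all allocations of `M`. -/
def MaxSW [Fintype N] (v : N → I → ℝ) (M : Finset I) (x : N → Finset I) : Prop :=
  ∀ y : N → Finset I, IsAllocation y M → SW v y ≤ SW v x

/-- A set `B` of (pure bad) items is identically ordered (IDO): it can be enumerated
as `c₁, …, c_k` with `v i c₁ ≤ v i c₂ ≤ … ≤ v i c_k` for every agent `i`. -/
def IDO (v : N → I → ℝ) (B : Finset I) : Prop :=
  ∃ l : List I, l.Nodup ∧ l.toFinset = B ∧ ∀ i : N, (l.map (v i)).Pairwise (· ≤ ·)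

end FairDivision

/-- Adding an item `j ∈ M \ S` that no agent values positively to
the bundle of a non-envious agent `i` with `v i j < 0` for whom `j` is (weakly)
the least painful of her bads preserves EFX. -/
theorem efx_preserved_adding_bad_to_sink {N I : Type*} [Fintype N] [Fintype I] [Nonempty N]
    (v : N → I → ℝ) (M S : Finset I) (x : N → Finset I) (j : I) (i : N)
    (hS : S ⊆ M) (hx : IsAllocation x S) (hEFX : EFX v x)
    (hj : j ∈ M \ S) (hneg : ∀ h : N, v h j ≤ 0) (hij : v i j < 0)
    (hsink : ∀ h : N, bval v i (x i) ≥ bval v i (x h))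
    (hworst : ∀ c ∈ x i, v i c < 0 → v i c ≤ v i j) :
    IsAllocation (Function.update x i (insert j (x i))) (insert j S) ∧
      EFX v (Function.update x i (insert j (x i))) := by
  classical
  obtain ⟨hdisj, hcov⟩ := hx
  have hjS : j ∉ S := (Finset.mem_sdiff.mp hj).2
  have hjx : ∀ h : N, j ∉ x h := by
    intro h hmem
    exact hjS (hcov ▸ Finset.mem_biUnion.mpr ⟨h, Finset.mem_univ h, hmem⟩)
  set x' := Function.update x i (insert j (x i)) with hx'
  have hx'i : x' i = insert j (x i) := Function.update_self _ _ _
  have hx'ne : ∀ h : N, h ≠ i → x' h = x h := fun h hh =>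
    Function.update_of_ne hh _ _
  have hbins : ∀ a : N, bval v a (insert j (x i)) = v a j + bval v a (x i) := by
    intro a
    simp [bval, Finset.sum_insert (hjx i)]
  constructor
  · constructor
    · intro a b hab
      rcases eq_or_ne a i with rfl | ha
      · rw [hx'i, hx'ne b (fun h => hab h.symm)]
        exact Finset.disjoint_insert_left.mpr ⟨hjx b, hdisj a b hab⟩
      · rw [hx'ne a ha]
        rcases eq_or_ne b i with rfl | hb
        · rw [hx'i]
          exact Finset.disjoint_insert_right.mpr ⟨hjx a, hdisj a b hab⟩
        · rw [hx'ne b hb]; exact hdisj a b hab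
    · ext c
      simp only [Finset.mem_biUnion, Finset.mem_univ, true_and, Finset.mem_insert]
      constructor
      · rintro ⟨h, hc⟩
        rcases eq_or_ne h i with rfl | hh
        · rw [hx'i, Finset.mem_insert] at hc
          rcases hc with rfl | hc
          · exact Or.inl rfl
          · exact Or.inr (hcov ▸ Finset.mem_biUnion.mpr ⟨h, Finset.mem_univ h, hc⟩)
        · rw [hx'ne h hh] at hc
          exact Or.inr (hcov ▸ Finset.mem_biUnion.mpr ⟨h, Finset.mem_univ h, hc⟩)
      · rintro (rfl | hc)
        · exact ⟨i, by rw [hx'i]; exact Finset.mem_insert_self _ _⟩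
        · obtain ⟨h, -, hch⟩ := Finset.mem_biUnion.mp (hcov ▸ hc : c ∈ Finset.univ.biUnion x)
          rcases eq_or_ne h i with rfl | hh
          · exact ⟨h, by rw [hx'i]; exact Finset.mem_insert_of_mem hch⟩
          · exact ⟨h, by rw [hx'ne h hh]; exact hch⟩
  · intro a b
    by_cases ha : a = i
    · subst ha
      by_cases hb : b = a
      · subst hb
        left; intro g hg hpos
        have he : bval v b ((x' b).erase g) = bval v b (x' b) - v b g :=
          Finset.sum_erase_eq_sub hg
        rw [he]; linarith
      · right
        intro c hc hcneg
        rw [hx'i] at hc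
        rw [hx'ne b hb, hx'i]
        rcases Finset.mem_insert.mp hc with hcj | hcx
        · subst hcj
          rw [Finset.erase_insert (hjx a)]
          exact hsink b
        · have hcj : c ≠ j := fun h => hjx a (h ▸ hcx)
          rw [Finset.erase_insert_of_ne (Ne.symm hcj)]
          have h1 : bval v a (insert j ((x a).erase c)) =
              v a j + bval v a ((x a).erase c) := by
            simp [bval, Finset.sum_insert (fun h => hjx a (Finset.erase_subset _ _ h))]
          have h2 : bval v a ((x a).erase c) = bval v a (x a) - v a c :=
            Finset.sum_erase_eq_sub hcx
          have := hworst c hcx hcneg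
          have := hsink b
          rw [h1, h2]; linarith
    · by_cases hb : b = i
      · subst hb
        rcases hEFX a b with h1 | h2
        · left
          intro g hg hpos
          rw [hx'ne a ha]
          rw [hx'i, Finset.mem_insert] at hg
          rw [hx'i]
          rcases hg with hgj | hgx
          · subst hgj; exact absurd hpos (not_lt.mpr (hneg a))
          · have hgj : g ≠ j := fun h => (hjx b) (h ▸ hgx)
            rw [Finset.erase_insert_of_ne (Ne.symm hgj)]
            have he : bval v a (insert j ((x b).erase g)) =
                v a j + bval v a ((x b).erase g) := by
              simp [bval, Finset.sum_insert (fun h => hjx b (Finset.erase_subset _ _ h))]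
            rw [he]
            have := h1 g hgx hpos
            linarith [hneg a]
        · right
          intro c hc hcneg
          rw [hx'ne a ha] at hc ⊢
          rw [hx'i, hbins a]
          have := h2 c hc hcneg
          linarith [hneg a]
      · rw [hx'ne a ha, hx'ne b hb]
        exact hEFX a b
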